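/- Let G be a spanning subgraph of the complete bipartite graph K_{m,m} with exactly 1 + 2·C(m,2) edges, equipped with a cute (2m-1)-edge-colouring, i.e., a colouring whose colour classes have sizes 1, 1, 1, 2, 2, 3, 3, ..., m-1, m-1. Then G has a heterochromatic spanning tree. -/

import Mathlib

open SimpleGraph Set

set_option linter.unusedSectionVars false
set_option linter.unusedVariables false
set_option maxHeartbeats 1000000


open Finset

section AbstractRado

variable {α : Type} [DecidableEq α]

lemma st17_biUnion_union {β : Type} [DecidableEq β] (A B : Finset β) (f : β → Finset α) :
    (A ∪ B).biUnion f = A.biUnion f ∪ B.biUnion f := by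
  ext x; simp [Finset.mem_biUnion, or_and_right, exists_or]

lemma st17_rank_diff_mono (r : Finset α → ℕ)
    (hmono : ∀ X Y : Finset α, X ⊆ Y → r X ≤ r Y)
    (hstep : ∀ (X : Finset α) (e : α), r (insert e X) ≤ r X + 1)
    (hdim : ∀ (X Y : Finset α) (e : α), X ⊆ Y → r (insert e X) = r X →
      r (insert e Y) = r Y)
    (Z : Finset α) : ∀ X Y : Finset α, X ⊆ Y →
      r (Z ∪ Y) + r X ≤ r (Z ∪ X) + r Y := by
  induction Z using Finset.induction_on with
  | empty => intro X Y h; simp only [Finset.empty_union]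
             have := hmono X Y h; omega
  | @insert a Z ha ih =>
    intro X Y h
    rw [Finset.insert_union, Finset.insert_union]
    have hXY : Z ∪ X ⊆ Z ∪ Y := Finset.union_subset_union_right h
    have h1 : r (Z ∪ X) ≤ r (insert a (Z ∪ X)) := hmono _ _ (Finset.subset_insert _ _)
    have h2 : r (insert a (Z ∪ X)) ≤ r (Z ∪ X) + 1 := hstep _ _
    rcases eq_or_lt_of_le h1 with heq | hlt
    · have := hdim _ _ a hXY heq.symm
      have := ih X Y h
      omega
    · have h3 : r (insert a (Z ∪ Y)) ≤ r (Z ∪ Y) + 1 := hstep _ _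
      have := ih X Y h
      omega

lemma st17_rank_submod (r : Finset α → ℕ)
    (hmono : ∀ X Y : Finset α, X ⊆ Y → r X ≤ r Y)
    (hstep : ∀ (X : Finset α) (e : α), r (insert e X) ≤ r X + 1)
    (hdim : ∀ (X Y : Finset α) (e : α), X ⊆ Y → r (insert e X) = r X →
      r (insert e Y) = r Y)
    (X Y : Finset α) : r (X ∪ Y) + r (X ∩ Y) ≤ r X + r Y := by
  have h := st17_rank_diff_mono r hmono hstep hdim Y (X ∩ Y) X Finset.inter_subset_left
  have h2 : Y ∪ (X ∩ Y) = Y := Finset.union_eq_left.mpr Finset.inter_subset_right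
  rw [h2, Finset.union_comm Y X] at h
  omega

lemma st17_rank_le_card (r : Finset α → ℕ)
    (h0 : r ∅ = 0)
    (hstep : ∀ (X : Finset α) (e : α), r (insert e X) ≤ r X + 1) :
    ∀ X : Finset α, r X ≤ X.card := by
  intro X
  induction X using Finset.induction_on with
  | empty => simp [h0]
  | @insert a X ha ih =>
    have := hstep X a
    rw [Finset.card_insert_of_notMem ha]
    omega

lemma st17_rank_closure_absorb (r : Finset α → ℕ)
    (hdim : ∀ (X Y : Finset α) (e : α), X ⊆ Y → r (insert e X) = r X →
      r (insert e Y) = r Y)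
    (X : Finset α) : ∀ D : Finset α, (∀ e ∈ D, r (insert e X) = r X) →
      r (X ∪ D) = r X := by
  intro D
  induction D using Finset.induction_on with
  | empty => simp
  | @insert a D ha ih =>
    intro h
    rw [Finset.union_insert]
    have hXD : r (X ∪ D) = r X := ih (fun e he => h e (Finset.mem_insert_of_mem he))
    have := hdim X (X ∪ D) a Finset.subset_union_left (h a (Finset.mem_insert_self a D))
    rw [this, hXD]

theorem st17_abstract_rado : ∀ (k : ℕ) (r : Finset α → ℕ),
    r ∅ = 0 →
    (∀ X Y : Finset α, X ⊆ Y → r X ≤ r Y) →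
    (∀ (X : Finset α) (e : α), r (insert e X) ≤ r X + 1) →
    (∀ (X Y : Finset α) (e : α), X ⊆ Y → r (insert e X) = r X →
      r (insert e Y) = r Y) →
    ∀ C : Fin k → Finset α,
    (∀ S : Finset (Fin k), S.card ≤ r (S.biUnion C)) →
    ∃ f : Fin k → α, (∀ i, f i ∈ C i) ∧ k ≤ r (Finset.image f Finset.univ) := by
  intro k
  induction k with
  | zero =>
    intro r h0 _ _ _ C _
    exact ⟨Fin.elim0, fun i => i.elim0, by simp⟩
  | succ k ih =>
    intro r h0 hmono hstep hdim C hcond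
    have hcond' : ∀ S : Finset (Fin k), S.card ≤ r (S.biUnion (fun i => C i.castSucc)) := by
      intro S
      have h1 : (S.image Fin.castSucc).biUnion C = S.biUnion (fun i => C i.castSucc) :=
        Finset.image_biUnion
      have hcard : (S.image Fin.castSucc).card = S.card :=
        Finset.card_image_of_injective _ (Fin.castSucc_injective k)
      rw [← h1, ← hcard]; exact hcond _
    -- Step 1: find e ∈ C (Fin.last k) good for all S
    have key : ∃ e ∈ C (Fin.last k), ∀ S : Finset (Fin k),
        S.card + 1 ≤ r (insert e (S.biUnion (fun i => C i.castSucc))) := by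
      by_contra hcon
      push_neg at hcon
      have hSe : ∀ e ∈ C (Fin.last k), ∃ S : Finset (Fin k),
          r (insert e (S.biUnion (fun i => C i.castSucc)))
            = r (S.biUnion (fun i => C i.castSucc)) ∧
          r (S.biUnion (fun i => C i.castSucc)) = S.card := by
        intro e he
        obtain ⟨S, hS⟩ := hcon e he
        have h1 : r (S.biUnion (fun i => C i.castSucc))
            ≤ r (insert e (S.biUnion (fun i => C i.castSucc))) :=
          hmono _ _ (Finset.subset_insert _ _)
        have h2 := hcond' S
        exact ⟨S, by omega, by omega⟩
      have tight_union : ∀ A B : Finset (Fin k),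
          r (A.biUnion (fun i => C i.castSucc)) = A.card →
          r (B.biUnion (fun i => C i.castSucc)) = B.card →
          r ((A ∪ B).biUnion (fun i => C i.castSucc)) = (A ∪ B).card := by
        intro A B hA hB
        have huAB := st17_biUnion_union A B (fun i => C i.castSucc)
        have hsub : (A ∩ B).biUnion (fun i => C i.castSucc)
            ⊆ A.biUnion (fun i => C i.castSucc) ∩ B.biUnion (fun i => C i.castSucc) := by
          intro x hx
          simp only [Finset.mem_biUnion] at hx
          obtain ⟨i, hi, hxi⟩ := hx
          simp only [Finset.mem_inter] at hi ⊢
          exact ⟨Finset.mem_biUnion.2 ⟨i, hi.1, hxi⟩, Finset.mem_biUnion.2 ⟨i, hi.2, hxi⟩⟩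
        have hsm := st17_rank_submod r hmono hstep hdim
          (A.biUnion (fun i => C i.castSucc)) (B.biUnion (fun i => C i.castSucc))
        have h1 := hmono _ _ hsub
        have h2 := hcond' (A ∩ B)
        have h3 := hcond' (A ∪ B)
        have h4 : (A ∪ B).card + (A ∩ B).card = A.card + B.card :=
          Finset.card_union_add_card_inter A B
        rw [huAB] at h3 ⊢
        omega
      have build : ∀ D : Finset α, D ⊆ C (Fin.last k) → ∃ T : Finset (Fin k),
          r (T.biUnion (fun i => C i.castSucc)) = T.card ∧
          ∀ e ∈ D, r (insert e (T.biUnion (fun i => C i.castSucc)))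
            = r (T.biUnion (fun i => C i.castSucc)) := by
        intro D
        induction D using Finset.induction_on with
        | empty =>
          intro _
          refine ⟨∅, ?_, by simp⟩
          simp only [Finset.biUnion_empty, h0, Finset.card_empty]
        | @insert a D ha ihD =>
          intro hsub
          obtain ⟨T, hT, hTclo⟩ := ihD (fun x hx => hsub (Finset.mem_insert_of_mem hx))
          obtain ⟨S, hS1, hS2⟩ := hSe a (hsub (Finset.mem_insert_self a D))
          refine ⟨T ∪ S, tight_union T S hT hS2, ?_⟩
          have hTsub : T.biUnion (fun i => C i.castSucc)
              ⊆ (T ∪ S).biUnion (fun i => C i.castSucc) :=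
            Finset.biUnion_subset_biUnion_of_subset_left _ Finset.subset_union_left
          have hSsub : S.biUnion (fun i => C i.castSucc)
              ⊆ (T ∪ S).biUnion (fun i => C i.castSucc) :=
            Finset.biUnion_subset_biUnion_of_subset_left _ Finset.subset_union_right
          intro e he
          rcases Finset.mem_insert.1 he with rfl | heD
          · exact hdim _ _ e hSsub hS1
          · exact hdim _ _ e hTsub (hTclo e heD)
      obtain ⟨T, hT, hTclo⟩ := build (C (Fin.last k)) subset_rfl
      have habs : r (T.biUnion (fun i => C i.castSucc) ∪ C (Fin.last k))
          = r (T.biUnion (fun i => C i.castSucc)) :=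
        st17_rank_closure_absorb r hdim _ _ hTclo
      have hS : ((T.image Fin.castSucc) ∪ {Fin.last k}).card ≤
          r (((T.image Fin.castSucc) ∪ {Fin.last k}).biUnion C) := hcond _
      have hbu : ((T.image Fin.castSucc) ∪ {Fin.last k}).biUnion C
          = T.biUnion (fun i => C i.castSucc) ∪ C (Fin.last k) := by
        rw [st17_biUnion_union, Finset.image_biUnion, Finset.singleton_biUnion]
      have hlast : Fin.last k ∉ T.image Fin.castSucc := by
        intro h
        obtain ⟨i, -, hi⟩ := Finset.mem_image.1 h
        exact (Fin.castSucc_lt_last i).ne hi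
      have hcard : ((T.image Fin.castSucc) ∪ {Fin.last k}).card = T.card + 1 := by
        rw [Finset.union_comm, ← Finset.insert_eq,
          Finset.card_insert_of_notMem hlast,
          Finset.card_image_of_injective _ (Fin.castSucc_injective k)]
      rw [hbu, habs, hcard, hT] at hS
      omega
    obtain ⟨e, he, hegood⟩ := key
    set r' : Finset α → ℕ := fun X => r (insert e X) - 1 with hr'
    have hre : r {e} = 1 := by
      have h1 := hegood ∅
      have h2 := hstep ∅ e
      simp only [Finset.biUnion_empty, Finset.card_empty, h0, Finset.insert_empty] at h1 h2
      omega
    have hrpos : ∀ X : Finset α, 1 ≤ r (insert e X) := by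
      intro X
      calc 1 = r {e} := hre.symm
      _ ≤ r (insert e X) := hmono _ _ (by intro x hx; simp_all)
    have h0' : r' ∅ = 0 := by
      simp only [hr', Finset.insert_empty, hre]
    have hmono' : ∀ X Y : Finset α, X ⊆ Y → r' X ≤ r' Y := by
      intro X Y h
      exact Nat.sub_le_sub_right (hmono _ _ (Finset.insert_subset_insert e h)) 1
    have hstep' : ∀ (X : Finset α) (a : α), r' (insert a X) ≤ r' X + 1 := by
      intro X a
      simp only [hr']
      have hc : insert e (insert a X) = insert a (insert e X) := Finset.insert_comm e a X
      rw [hc]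
      have := hstep (insert e X) a
      have := hrpos X
      omega
    have hdim' : ∀ (X Y : Finset α) (a : α), X ⊆ Y → r' (insert a X) = r' X →
        r' (insert a Y) = r' Y := by
      intro X Y a hXY h
      simp only [hr'] at h ⊢
      have hcX : insert e (insert a X) = insert a (insert e X) := Finset.insert_comm e a X
      have hcY : insert e (insert a Y) = insert a (insert e Y) := Finset.insert_comm e a Y
      rw [hcX] at h
      rw [hcY]
      have h1 := hrpos X
      have h2 : r (insert e X) ≤ r (insert a (insert e X)) :=
        hmono _ _ (Finset.subset_insert a (insert e X))
      have h3 : r (insert a (insert e X)) = r (insert e X) := by omega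
      have h4 := hdim _ _ a (Finset.insert_subset_insert e hXY) h3
      omega
    have hcondIH : ∀ S : Finset (Fin k),
        S.card ≤ r' (S.biUnion (fun i => C i.castSucc)) := by
      intro S
      have := hegood S
      simp only [hr']
      omega
    obtain ⟨f', hf'mem, hf'rank⟩ := ih r' h0' hmono' hstep' hdim'
      (fun i => C i.castSucc) hcondIH
    refine ⟨Fin.lastCases e f', ?_, ?_⟩
    · intro i
      refine Fin.lastCases ?_ ?_ i
      · simpa using he
      · intro j; simpa using hf'mem j
    · have himg : Finset.image (Fin.lastCases e f' : Fin (k+1) → α) Finset.univ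
          = insert e (Finset.image f' Finset.univ) := by
        ext x
        simp only [Finset.mem_image, Finset.mem_insert, Finset.mem_univ, true_and]
        constructor
        · rintro ⟨i, rfl⟩
          refine Fin.lastCases ?_ ?_ i
          · left; simp
          · intro j; right; exact ⟨j, by simp⟩
        · rintro (rfl | ⟨j, rfl⟩)
          · exact ⟨Fin.last k, by simp⟩
          · exact ⟨j.castSucc, by simp⟩
      rw [himg]
      simp only [hr'] at hf'rank
      have := hrpos (Finset.image f' Finset.univ)
      omega

end AbstractRado


open SimpleGraph Finset

section GraphicRank

variable {V : Type} [Fintype V] [DecidableEq V]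

/-- number of connected components of the graph on `V` with edge set `E` -/
noncomputable def st17_comps (E : Finset (Sym2 V)) : ℕ :=
  Nat.card (SimpleGraph.fromEdgeSet (E : Set (Sym2 V))).ConnectedComponent

/-- graphic rank -/
noncomputable def st17_rank (E : Finset (Sym2 V)) : ℕ :=
  Fintype.card V - st17_comps E

lemma st17_fromEdgeSet_loop (a : V) (s : Set (Sym2 V)) :
    SimpleGraph.fromEdgeSet (insert s(a,a) s) = SimpleGraph.fromEdgeSet s := by
  ext x y
  simp only [fromEdgeSet_adj, Set.mem_insert_iff]
  constructor
  · rintro ⟨he | he, hne⟩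
    · rcases Sym2.eq_iff.1 he with ⟨rfl, rfl⟩ | ⟨rfl, rfl⟩ <;> exact absurd rfl hne
    · exact ⟨he, hne⟩
  · rintro ⟨he, hne⟩; exact ⟨Or.inr he, hne⟩

lemma st17_reach_insert_aux {s : Set (Sym2 V)} {a b x y : V}
    (w : (SimpleGraph.fromEdgeSet (insert s(a,b) s)).Walk x y) :
    (SimpleGraph.fromEdgeSet s).Reachable x y ∨
    ((SimpleGraph.fromEdgeSet s).Reachable x a ∧ (SimpleGraph.fromEdgeSet s).Reachable b y) ∨
    ((SimpleGraph.fromEdgeSet s).Reachable x b ∧ (SimpleGraph.fromEdgeSet s).Reachable a y) := by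
  induction w with
  | nil => exact Or.inl (Reachable.refl _)
  | @cons x z y h p ih =>
    rw [fromEdgeSet_adj, Set.mem_insert_iff] at h
    obtain ⟨he | he, hne⟩ := h
    · rcases Sym2.eq_iff.1 he with ⟨rfl, rfl⟩ | ⟨rfl, rfl⟩
      · -- x = a, z = b
        rcases ih with h1 | ⟨h1, h2⟩ | ⟨h1, h2⟩
        · exact Or.inr (Or.inl ⟨Reachable.refl _, h1⟩)
        · exact Or.inr (Or.inl ⟨Reachable.refl _, h2⟩)
        · exact Or.inl h2
      · -- x = b, z = a
        rcases ih with h1 | ⟨h1, h2⟩ | ⟨h1, h2⟩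
        · exact Or.inr (Or.inr ⟨Reachable.refl _, h1⟩)
        · exact Or.inl h2
        · exact Or.inr (Or.inr ⟨Reachable.refl _, h2⟩)
    · have hxz : (SimpleGraph.fromEdgeSet s).Reachable x z :=
        ((SimpleGraph.fromEdgeSet_adj _).2 ⟨he, hne⟩).reachable
      rcases ih with h1 | ⟨h1, h2⟩ | ⟨h1, h2⟩
      · exact Or.inl (hxz.trans h1)
      · exact Or.inr (Or.inl ⟨hxz.trans h1, h2⟩)
      · exact Or.inr (Or.inr ⟨hxz.trans h1, h2⟩)

lemma st17_reach_insert {s : Set (Sym2 V)} {a b : V} (hab : a ≠ b) (x y : V) :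
    (SimpleGraph.fromEdgeSet (insert s(a,b) s)).Reachable x y ↔
    ((SimpleGraph.fromEdgeSet s).Reachable x y ∨
    ((SimpleGraph.fromEdgeSet s).Reachable x a ∧ (SimpleGraph.fromEdgeSet s).Reachable b y) ∨
    ((SimpleGraph.fromEdgeSet s).Reachable x b ∧ (SimpleGraph.fromEdgeSet s).Reachable a y)) := by
  constructor
  · rintro ⟨w⟩; exact st17_reach_insert_aux w
  · have hmono : SimpleGraph.fromEdgeSet s ≤ SimpleGraph.fromEdgeSet (insert s(a,b) s) :=
      SimpleGraph.fromEdgeSet_mono (Set.subset_insert _ _)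
    have hadj : (SimpleGraph.fromEdgeSet (insert s(a,b) s)).Adj a b :=
      (SimpleGraph.fromEdgeSet_adj _).2 ⟨Set.mem_insert _ _, hab⟩
    rintro (h | ⟨h1, h2⟩ | ⟨h1, h2⟩)
    · exact h.mono hmono
    · exact ((h1.mono hmono).trans hadj.reachable).trans (h2.mono hmono)
    · exact ((h1.mono hmono).trans hadj.symm.reachable).trans (h2.mono hmono)

lemma st17_comps_le (E : Finset (Sym2 V)) : st17_comps E ≤ Fintype.card V := by
  have hsurj : Function.Surjective
      ((SimpleGraph.fromEdgeSet (E : Set (Sym2 V))).connectedComponentMk) :=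
    fun c => c.exists_rep
  calc st17_comps E ≤ Nat.card V := Nat.card_le_card_of_surjective _ hsurj
  _ = Fintype.card V := Nat.card_eq_fintype_card

lemma st17_comps_antitone {E F : Finset (Sym2 V)} (h : E ⊆ F) :
    st17_comps F ≤ st17_comps E := by
  have hle : SimpleGraph.fromEdgeSet (E : Set (Sym2 V)) ≤
      SimpleGraph.fromEdgeSet (F : Set (Sym2 V)) :=
    SimpleGraph.fromEdgeSet_mono (by exact_mod_cast h)
  have hsurj : Function.Surjective
      (ConnectedComponent.map (SimpleGraph.Hom.ofLE hle)) := by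
    intro c
    refine c.ind fun v => ?_
    exact ⟨(SimpleGraph.fromEdgeSet (E : Set (Sym2 V))).connectedComponentMk v, by simp⟩
  exact Nat.card_le_card_of_surjective _ hsurj

lemma st17_comps_insert_reach {E : Finset (Sym2 V)} {a b : V}
    (h : (SimpleGraph.fromEdgeSet (E : Set (Sym2 V))).Reachable a b) :
    st17_comps (insert s(a,b) E) = st17_comps E := by
  rcases eq_or_ne a b with rfl | hab
  · unfold st17_comps
    rw [Finset.coe_insert, st17_fromEdgeSet_loop]
  · unfold st17_comps
    rw [Finset.coe_insert]
    have hle : SimpleGraph.fromEdgeSet (E : Set (Sym2 V)) ≤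
        SimpleGraph.fromEdgeSet (insert s(a,b) (E : Set (Sym2 V))) :=
      SimpleGraph.fromEdgeSet_mono (Set.subset_insert _ _)
    have hbij : Function.Bijective
        (ConnectedComponent.map (SimpleGraph.Hom.ofLE hle)) := by
      constructor
      · refine ConnectedComponent.ind₂ fun u v huv => ?_
        simp only [ConnectedComponent.map_mk, SimpleGraph.Hom.ofLE_apply,
          ConnectedComponent.eq] at huv ⊢
        rcases (st17_reach_insert hab u v).1 huv with h1 | ⟨h1, h2⟩ | ⟨h1, h2⟩
        · exact h1
        · exact (h1.trans h).trans h2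
        · exact (h1.trans h.symm).trans h2
      · intro c
        refine c.ind fun v => ?_
        exact ⟨(SimpleGraph.fromEdgeSet (E : Set (Sym2 V))).connectedComponentMk v, by simp⟩
    exact (Nat.card_eq_of_bijective _ hbij).symm

lemma st17_comps_insert_not_reach_lt {E : Finset (Sym2 V)} {a b : V} (hab : a ≠ b)
    (h : ¬ (SimpleGraph.fromEdgeSet (E : Set (Sym2 V))).Reachable a b) :
    st17_comps (insert s(a,b) E) < st17_comps E := by
  classical
  set G := SimpleGraph.fromEdgeSet (E : Set (Sym2 V)) with hG
  set G' := SimpleGraph.fromEdgeSet ((insert s(a,b) E : Finset (Sym2 V)) : Set (Sym2 V)) with hG'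
  have hle : G ≤ G' := by
    rw [hG, hG', Finset.coe_insert]
    exact SimpleGraph.fromEdgeSet_mono (Set.subset_insert _ _)
  letI : Fintype G.ConnectedComponent := Fintype.ofFinite _
  letI : Fintype G'.ConnectedComponent := Fintype.ofFinite _
  have hsurj : Function.Surjective
      (ConnectedComponent.map (SimpleGraph.Hom.ofLE hle)) := by
    intro c
    refine c.ind fun v => ?_
    exact ⟨G.connectedComponentMk v, by simp⟩
  have hninj : ¬ Function.Injective
      (ConnectedComponent.map (SimpleGraph.Hom.ofLE hle)) := by
    intro hinj
    have hadj : G'.Adj a b := by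
      rw [hG', Finset.coe_insert]
      exact (SimpleGraph.fromEdgeSet_adj _).2 ⟨Set.mem_insert _ _, hab⟩
    have : G.connectedComponentMk a = G.connectedComponentMk b := by
      apply hinj
      simp only [ConnectedComponent.map_mk, SimpleGraph.Hom.ofLE_apply]
      exact ConnectedComponent.sound hadj.reachable
    exact h (ConnectedComponent.exact this)
  have := Fintype.card_lt_of_surjective_not_injective _ hsurj hninj
  unfold st17_comps
  rw [Nat.card_eq_fintype_card, Nat.card_eq_fintype_card]
  exact this

lemma st17_comps_insert_ge {E : Finset (Sym2 V)} {a b : V} (hab : a ≠ b) :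
    st17_comps E ≤ st17_comps (insert s(a,b) E) + 1 := by
  classical
  rcases Classical.em ((SimpleGraph.fromEdgeSet (E : Set (Sym2 V))).Reachable a b) with h | h
  · rw [st17_comps_insert_reach h]
    omega
  · set G := SimpleGraph.fromEdgeSet (E : Set (Sym2 V)) with hG
    set G' := SimpleGraph.fromEdgeSet ((insert s(a,b) E : Finset (Sym2 V)) : Set (Sym2 V)) with hG'
    have hle : G ≤ G' := by
      rw [hG, hG', Finset.coe_insert]
      exact SimpleGraph.fromEdgeSet_mono (Set.subset_insert _ _)
    letI : Fintype G.ConnectedComponent := Fintype.ofFinite _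
    letI : Fintype G'.ConnectedComponent := Fintype.ofFinite _
    set φ := ConnectedComponent.map (SimpleGraph.Hom.ofLE hle) with hφ
    have key : ∀ u v : V, φ (G.connectedComponentMk u) = φ (G.connectedComponentMk v) →
        G.connectedComponentMk u ≠ G.connectedComponentMk b →
        G.connectedComponentMk v ≠ G.connectedComponentMk b →
        G.connectedComponentMk u = G.connectedComponentMk v := by
      intro u v heq hu hv
      simp only [hφ, ConnectedComponent.map_mk, SimpleGraph.Hom.ofLE_apply,
        ConnectedComponent.eq] at heq
      have heq' : (SimpleGraph.fromEdgeSet (insert s(a,b) (E : Set (Sym2 V)))).Reachable u v := by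
        rw [hG', Finset.coe_insert] at heq
        exact heq
      rcases (st17_reach_insert hab u v).1 heq' with h1 | ⟨h1, h2⟩ | ⟨h1, h2⟩
      · exact ConnectedComponent.sound h1
      · exact absurd (ConnectedComponent.sound h2.symm) hv
      · exact absurd (ConnectedComponent.sound h1) hu
    have hinj : ∀ q1 q2 : G.ConnectedComponent, q1 ≠ G.connectedComponentMk b →
        q2 ≠ G.connectedComponentMk b → φ q1 = φ q2 → q1 = q2 :=
      ConnectedComponent.ind₂ (fun u v hu hv heq => key u v heq hu hv)
    have hcard2 : (Finset.univ.erase (G.connectedComponentMk b)).card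
        ≤ Fintype.card G'.ConnectedComponent := by
      rw [← Finset.card_univ]
      refine Finset.card_le_card_of_injOn φ (fun x _ => Finset.mem_univ _) ?_
      intro q1 hq1 q2 hq2 heq
      exact hinj q1 q2 (Finset.mem_erase.1 hq1).1 (Finset.mem_erase.1 hq2).1 heq
    have hcard1 : (Finset.univ.erase (G.connectedComponentMk b)).card + 1
        = Fintype.card G.ConnectedComponent := by
      rw [Finset.card_erase_of_mem (Finset.mem_univ _), Finset.card_univ]
      have : 0 < Fintype.card G.ConnectedComponent :=
        Fintype.card_pos_iff.2 ⟨G.connectedComponentMk b⟩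
      omega
    have e1 : st17_comps E = Fintype.card G.ConnectedComponent := by
      rw [st17_comps, ← Nat.card_eq_fintype_card, hG]
    have e2 : st17_comps (insert s(a,b) E) = Fintype.card G'.ConnectedComponent := by
      rw [st17_comps, ← Nat.card_eq_fintype_card, hG']
    omega

lemma st17_rank_empty : st17_rank (∅ : Finset (Sym2 V)) = 0 := by
  have : st17_comps (∅ : Finset (Sym2 V)) = Fintype.card V := by
    rw [st17_comps, Finset.coe_empty, SimpleGraph.fromEdgeSet_empty]
    have hbij : Function.Bijective ((⊥ : SimpleGraph V).connectedComponentMk) := by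
      constructor
      · intro u v h
        exact SimpleGraph.reachable_bot.1 (ConnectedComponent.exact h)
      · exact fun c => c.exists_rep
    rw [← Nat.card_eq_fintype_card]
    exact (Nat.card_eq_of_bijective ((⊥ : SimpleGraph V).connectedComponentMk) hbij).symm
  rw [st17_rank, this]
  omega

lemma st17_rank_mono {E F : Finset (Sym2 V)} (h : E ⊆ F) : st17_rank E ≤ st17_rank F := by
  have := st17_comps_antitone h
  rw [st17_rank, st17_rank]
  omega

lemma st17_comps_insert_loop (E : Finset (Sym2 V)) (a : V) :
    st17_comps (insert s(a,a) E) = st17_comps E := by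
  rw [st17_comps, st17_comps, Finset.coe_insert, st17_fromEdgeSet_loop]

lemma st17_rank_step (E : Finset (Sym2 V)) (e : Sym2 V) :
    st17_rank (insert e E) ≤ st17_rank E + 1 := by
  induction e with
  | _ a b =>
    rcases eq_or_ne a b with rfl | hab
    · have := st17_comps_insert_loop E a
      rw [st17_rank, st17_rank]
      omega
    · have h1 := st17_comps_insert_ge (E := E) hab
      have h2 := st17_comps_antitone (Finset.subset_insert (s(a,b)) E)
      have h3 := st17_comps_le E
      rw [st17_rank, st17_rank]
      omega

lemma st17_rank_dim (E F : Finset (Sym2 V)) (e : Sym2 V) (hEF : E ⊆ F)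
    (h : st17_rank (insert e E) = st17_rank E) :
    st17_rank (insert e F) = st17_rank F := by
  induction e with
  | _ a b =>
    rcases eq_or_ne a b with rfl | hab
    · have := st17_comps_insert_loop F a
      rw [st17_rank, st17_rank]
      omega
    · have hcE : st17_comps (insert s(a,b) E) = st17_comps E := by
        rw [st17_rank, st17_rank] at h
        have h2 := st17_comps_antitone (Finset.subset_insert (s(a,b)) E)
        have h3 := st17_comps_le E
        omega
      have hR : (SimpleGraph.fromEdgeSet (E : Set (Sym2 V))).Reachable a b := by
        by_contra hn
        have := st17_comps_insert_not_reach_lt hab hn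
        omega
      have hRF : (SimpleGraph.fromEdgeSet (F : Set (Sym2 V))).Reachable a b :=
        hR.mono (SimpleGraph.fromEdgeSet_mono (by exact_mod_cast hEF))
      have := st17_comps_insert_reach hRF
      rw [st17_rank, st17_rank]
      omega

lemma st17_connected_of_comps_eq_one {E : Finset (Sym2 V)} [Nonempty V]
    (h : st17_comps E = 1) : (SimpleGraph.fromEdgeSet (E : Set (Sym2 V))).Connected := by
  rw [SimpleGraph.connected_iff]
  refine ⟨fun u v => ?_, inferInstance⟩
  have hsub : Subsingleton (SimpleGraph.fromEdgeSet (E : Set (Sym2 V))).ConnectedComponent :=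
    (Nat.card_eq_one_iff_unique.1 h).1
  exact ConnectedComponent.exact (Subsingleton.elim _ _)

end GraphicRank


section Capacity

lemma st17_super {gam : Type} [DecidableEq gam] (s : Finset gam) (w f : gam → ℕ)
    (hw : ∀ q ∈ s, 1 ≤ w q) (hf : ∀ q ∈ s, f q ≤ (w q + 1) * (w q + 1) / 4) :
    (∑ q ∈ s, f q) ≤ ((∑ q ∈ s, w q) + 1) * ((∑ q ∈ s, w q) + 1) / 4 := by
  induction s using Finset.induction_on with
  | empty => simp
  | @insert q0 s hq0 ih =>
    rw [Finset.sum_insert hq0, Finset.sum_insert hq0]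
    have hb : 1 ≤ w q0 := hw q0 (Finset.mem_insert_self _ _)
    have hfq := hf q0 (Finset.mem_insert_self _ _)
    have ihs := ih (fun q hq => hw q (Finset.mem_insert_of_mem hq))
      (fun q hq => hf q (Finset.mem_insert_of_mem hq))
    set b := w q0
    set B := ∑ q ∈ s, w q with hB
    set x := ∑ q ∈ s, f q
    rcases Nat.eq_zero_or_pos B with hB0 | hBpos
    · rw [hB0] at ihs ⊢
      simp only [Nat.add_zero]
      norm_num at ihs
      omega
    · have h4 : (b + 1) * (b + 1) + (B + 1) * (B + 1) ≤ (b + B + 1) * (b + B + 1) := by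
        nlinarith
      set p := (b + 1) * (b + 1)
      set q := (B + 1) * (B + 1)
      set z := (b + B + 1) * (b + B + 1)
      omega

lemma st17_sq_div_mono {a b : ℕ} (h : a ≤ b) : a * a / 4 ≤ b * b / 4 :=
  Nat.div_le_div_right (Nat.mul_le_mul h h)

lemma st17_capacity {m : ℕ} (E : Finset (Sym2 (Fin m ⊕ Fin m)))
    (hbip : ∀ e ∈ E, ∃ u v : Fin m, e = s(Sum.inl u, Sum.inr v)) :
    E.card ≤ (st17_rank E + 1) * (st17_rank E + 1) / 4 := by
  classical
  set G := SimpleGraph.fromEdgeSet (E : Set (Sym2 (Fin m ⊕ Fin m))) with hG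
  letI : Fintype G.ConnectedComponent := Fintype.ofFinite _
  -- pairs representation
  set ι : Fin m × Fin m → Sym2 (Fin m ⊕ Fin m) :=
    fun p => s(Sum.inl p.1, Sum.inr p.2) with hι
  have hιinj : Function.Injective ι := by
    intro p p' h
    simp only [hι, Sym2.eq_iff] at h
    rcases h with ⟨h1, h2⟩ | ⟨h1, h2⟩
    · exact Prod.ext (Sum.inl_injective h1) (Sum.inr_injective h2)
    · exact absurd h1 (by simp)
  set E' : Finset (Fin m × Fin m) := Finset.univ.filter (fun p => ι p ∈ E) with hE'
  have hEcard : E.card = E'.card := by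
    have himg : E'.image ι = E := by
      apply Finset.Subset.antisymm
      · intro e he
        obtain ⟨p, hp, rfl⟩ := Finset.mem_image.1 he
        exact (Finset.mem_filter.1 hp).2
      · intro e he
        obtain ⟨u, v, rfl⟩ := hbip e he
        exact Finset.mem_image.2 ⟨(u, v), Finset.mem_filter.2 ⟨Finset.mem_univ _, he⟩, rfl⟩
    rw [← himg, Finset.card_image_of_injective _ hιinj]
  -- component of a pair
  set ψ : Fin m × Fin m → G.ConnectedComponent :=
    fun p => G.connectedComponentMk (Sum.inl p.1) with hψ
  have hψr : ∀ p ∈ E', G.connectedComponentMk (Sum.inr p.2) = ψ p := by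
    intro p hp
    have hadj : G.Adj (Sum.inl p.1) (Sum.inr p.2) := by
      rw [hG]
      refine (SimpleGraph.fromEdgeSet_adj _).2 ⟨?_, by simp⟩
      exact_mod_cast (Finset.mem_filter.1 hp).2
    exact (ConnectedComponent.sound hadj.reachable).symm
  -- left/right vertex classes
  set L : G.ConnectedComponent → Finset (Fin m) :=
    fun q => Finset.univ.filter (fun u => G.connectedComponentMk (Sum.inl u) = q) with hL
  set R : G.ConnectedComponent → Finset (Fin m) :=
    fun q => Finset.univ.filter (fun v => G.connectedComponentMk (Sum.inr v) = q) with hR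
  set a : G.ConnectedComponent → ℕ := fun q => (L q).card + (R q).card with ha
  have haq : ∀ q, a q = (L q).card + (R q).card := fun q => rfl
  have hsumL : ∑ q : G.ConnectedComponent, (L q).card = m := by
    have h := Finset.card_eq_sum_card_fiberwise
      (fun (u : Fin m) (_ : u ∈ Finset.univ) =>
        Finset.mem_univ (G.connectedComponentMk (Sum.inl u)))
    rw [Finset.card_univ, Fintype.card_fin] at h
    exact h.symm
  have hsumR : ∑ q : G.ConnectedComponent, (R q).card = m := by
    have h := Finset.card_eq_sum_card_fiberwise
      (fun (v : Fin m) (_ : v ∈ Finset.univ) =>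
        Finset.mem_univ (G.connectedComponentMk (Sum.inr v)))
    rw [Finset.card_univ, Fintype.card_fin] at h
    exact h.symm
  have hsuma : ∑ q : G.ConnectedComponent, a q = 2 * m := by
    rw [ha, Finset.sum_add_distrib, hsumL, hsumR]
    omega
  have hapos : ∀ q : G.ConnectedComponent, 1 ≤ a q := by
    intro q
    obtain ⟨v, hv⟩ := q.exists_rep
    rcases v with u | u
    · have hmem : u ∈ L q := Finset.mem_filter.2 ⟨Finset.mem_univ _, hv⟩
      have := Finset.card_pos.2 ⟨u, hmem⟩
      have := haq q
      omega
    · have hmem : u ∈ R q := Finset.mem_filter.2 ⟨Finset.mem_univ _, hv⟩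
      have := Finset.card_pos.2 ⟨u, hmem⟩
      have := haq q
      omega
  -- fibers of E' over components
  set fib : G.ConnectedComponent → Finset (Fin m × Fin m) :=
    fun q => E'.filter (fun p => ψ p = q) with hfib
  have hE'card : E'.card = ∑ q : G.ConnectedComponent, (fib q).card :=
    Finset.card_eq_sum_card_fiberwise (fun p _ => Finset.mem_univ (ψ p))
  have hfibsub : ∀ q : G.ConnectedComponent, fib q ⊆ (L q) ×ˢ (R q) := by
    intro q p hp
    obtain ⟨hpE, hpq⟩ := Finset.mem_filter.1 hp
    rw [Finset.mem_product]
    constructor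
    · exact Finset.mem_filter.2 ⟨Finset.mem_univ _, hpq⟩
    · refine Finset.mem_filter.2 ⟨Finset.mem_univ _, ?_⟩
      rw [hψr p hpE, hpq]
  have hfible : ∀ q : G.ConnectedComponent, (fib q).card ≤ (L q).card * (R q).card := by
    intro q
    have := Finset.card_le_card (hfibsub q)
    rwa [Finset.card_product] at this
  have hfible2 : ∀ q : G.ConnectedComponent, (fib q).card ≤ a q * a q / 4 := by
    intro q
    have h1 := hfible q
    have h4 : 4 * ((L q).card * (R q).card) ≤ a q * a q := by
      rw [haq q]
      zify
      nlinarith [sq_nonneg (((L q).card : ℤ) - ((R q).card : ℤ))]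
    set xy := (L q).card * (R q).card
    set AA := a q * a q
    omega
  -- components containing an edge
  set Qe : Finset G.ConnectedComponent :=
    Finset.univ.filter (fun q => (fib q).Nonempty) with hQe
  have hE'sum : E'.card = ∑ q ∈ Qe, (fib q).card := by
    rw [hE'card]
    rw [← Finset.sum_subset (Finset.subset_univ Qe)]
    intro q hq hq2
    have hne : ¬ (fib q).Nonempty := by
      intro hne
      exact hq2 (Finset.mem_filter.2 ⟨Finset.mem_univ _, hne⟩)
    rw [Finset.card_eq_zero]
    exact Finset.not_nonempty_iff_eq_empty.1 hne
  have ha2 : ∀ q ∈ Qe, 2 ≤ a q := by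
    intro q hq
    obtain ⟨p, hp⟩ := (Finset.mem_filter.1 hq).2
    have hmem := hfibsub q hp
    rw [Finset.mem_product] at hmem
    have h1 := Finset.card_pos.2 ⟨p.1, hmem.1⟩
    have h2 := Finset.card_pos.2 ⟨p.2, hmem.2⟩
    have := haq q
    omega
  -- weights
  set w : G.ConnectedComponent → ℕ := fun q => a q - 1 with hw
  have hwq : ∀ q, w q = a q - 1 := fun q => rfl
  have hsumw : (∑ q ∈ Qe, w q) ≤ st17_rank E := by
    have h1 : (∑ q ∈ Qe, w q) ≤ ∑ q : G.ConnectedComponent, w q :=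
      Finset.sum_le_sum_of_subset (Finset.subset_univ Qe)
    have h2 : (∑ q : G.ConnectedComponent, w q) + Fintype.card G.ConnectedComponent
        = 2 * m := by
      rw [← Finset.card_univ, Finset.card_eq_sum_ones, ← Finset.sum_add_distrib, ← hsuma]
      apply Finset.sum_congr rfl
      intro q _
      have := hapos q
      have := hwq q
      omega
    have hcomps : st17_comps E = Fintype.card G.ConnectedComponent := by
      rw [st17_comps, Nat.card_eq_fintype_card]
    have hcV : Fintype.card (Fin m ⊕ Fin m) = 2 * m := by
      simp [Fintype.card_sum]
      omega
    have h3 : st17_rank E = 2 * m - Fintype.card G.ConnectedComponent := by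
      rw [st17_rank, hcomps, hcV]
    omega
  have hcap : (∑ q ∈ Qe, (fib q).card) ≤
      ((∑ q ∈ Qe, w q) + 1) * ((∑ q ∈ Qe, w q) + 1) / 4 := by
    refine st17_super Qe w (fun q => (fib q).card) ?_ ?_
    · intro q hq
      have := ha2 q hq
      have := hwq q
      omega
    · intro q hq
      have h1 := hfible2 q
      have h2 : a q = w q + 1 := by
        have := ha2 q hq
        have := hwq q
        omega
      rw [← h2]
      exact h1
  calc E.card = E'.card := hEcard
  _ = ∑ q ∈ Qe, (fib q).card := hE'sum
  _ ≤ ((∑ q ∈ Qe, w q) + 1) * ((∑ q ∈ Qe, w q) + 1) / 4 := hcap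
  _ ≤ (st17_rank E + 1) * (st17_rank E + 1) / 4 :=
      st17_sq_div_mono (by omega)

lemma st17_rank_of_card {m : ℕ} (E : Finset (Sym2 (Fin m ⊕ Fin m)))
    (hbip : ∀ e ∈ E, ∃ u v : Fin m, e = s(Sum.inl u, Sum.inr v))
    (k : ℕ) (hcard : k * k / 4 + 1 ≤ E.card) : k ≤ st17_rank E := by
  by_contra h
  push_neg at h
  have h1 := st17_capacity E hbip
  have h2 : (st17_rank E + 1) * (st17_rank E + 1) / 4 ≤ k * k / 4 :=
    st17_sq_div_mono (by omega)
  set u := (st17_rank E + 1) * (st17_rank E + 1)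
  set v := k * k
  omega

end Capacity


open SimpleGraph Finset

section Sums

lemma st17_sum_min : ∀ (n : ℕ) (S : Finset ℕ), S.card = n → (∀ x ∈ S, 1 ≤ x) →
    ∀ f : ℕ → ℕ, Monotone f →
    ∑ i ∈ Finset.Icc 1 n, f i ≤ ∑ i ∈ S, f i := by
  intro n
  induction n with
  | zero => simp
  | succ n ih =>
    intro S hcard hpos f hf
    have hne : S.Nonempty := Finset.card_pos.1 (by omega)
    set M := S.max' hne with hM
    have hMmem := S.max'_mem hne
    have hMax : ∀ x ∈ S, x ≤ M := fun x hx => S.le_max' x hx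
    have hMS : n + 1 ≤ M := by
      have hsub : S ⊆ Finset.Icc 1 M := fun x hx =>
        Finset.mem_Icc.2 ⟨hpos x hx, hMax x hx⟩
      have := Finset.card_le_card hsub
      rw [Nat.card_Icc] at this
      omega
    have hrest := ih (S.erase M) (by rw [Finset.card_erase_of_mem hMmem]; omega)
      (fun x hx => hpos x (Finset.mem_of_mem_erase hx)) f hf
    have hsplit : f M + ∑ i ∈ S.erase M, f i = ∑ i ∈ S, f i :=
      Finset.add_sum_erase S f hMmem
    have hIcc : ∑ i ∈ Finset.Icc 1 (n+1), f i = (∑ i ∈ Finset.Icc 1 n, f i) + f (n+1) :=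
      Finset.sum_Icc_succ_top (by omega) f
    have hfM := hf hMS
    omega

lemma st17_sum_sizes : ∀ k : ℕ, 1 ≤ k →
    ∑ i ∈ Finset.Icc 1 k, max (i / 2) 1 = k * k / 4 + 1 := by
  intro k
  induction k with
  | zero => omega
  | succ k ih =>
    intro _
    rcases Nat.eq_zero_or_pos k with rfl | hk0
    · simp
    · rw [Finset.sum_Icc_succ_top (by omega), ih hk0]
      rcases Nat.even_or_odd k with ⟨j, rfl⟩ | ⟨j, rfl⟩
      · have e1 : (j + j) * (j + j) = 4 * (j * j) := by ring
        have e2 : (j + j + 1) * (j + j + 1) = 4 * (j * j) + 4 * j + 1 := by ring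
        set t := j * j
        omega
      · have e1 : (2 * j + 1) * (2 * j + 1) = 4 * (j * j) + 4 * j + 1 := by ring
        have e2 : (2 * j + 1 + 1) * (2 * j + 1 + 1) = 4 * (j * j) + 8 * j + 4 := by ring
        set t := j * j
        omega

lemma st17_max_mono : Monotone (fun j : ℕ => max (j / 2) 1) :=
  fun a b h => max_le_max (Nat.div_le_div_right h) le_rfl

end Sums

/-- a spanning subgraph of `K_{m,m}` with `1 + 2·C(m,2)` edges carrying
a cute `(2m-1)`-edge-colouring (class sizes `1, 1, 1, 2, 2, …, m-1, m-1`) has a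
heterochromatic spanning tree.  (For `i = 1, …, 2m-1` the `i`-th class size is
`max (i/2) 1`, giving the multiset `{1, 1, 1, 2, 2, …, m-1, m-1}`.) -/
theorem stmt17 (m : ℕ) (G : SimpleGraph (Fin m ⊕ Fin m))
    (hG : G ≤ completeBipartiteGraph (Fin m) (Fin m))
    (hE : G.edgeSet.ncard = 1 + 2 * m.choose 2)
    (col : Sym2 (Fin m ⊕ Fin m) → ℕ)
    (hcol : ∀ e ∈ G.edgeSet, col e ∈ Set.Icc 1 (2 * m - 1))
    (g : ℕ → ℕ) (hg : Set.BijOn g (Set.Icc 1 (2 * m - 1)) (Set.Icc 1 (2 * m - 1)))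
    (hcute : ∀ i ∈ Set.Icc 1 (2 * m - 1),
      ({e ∈ G.edgeSet | col e = g i} : Set (Sym2 (Fin m ⊕ Fin m))).ncard = max (i / 2) 1) :
    ∃ T : SimpleGraph (Fin m ⊕ Fin m), T ≤ G ∧ T.IsTree ∧ Set.InjOn col T.edgeSet := by
  classical
  rcases Nat.eq_zero_or_pos m with rfl | hm
  · exfalso
    have hempty : G.edgeSet = ∅ := Set.eq_empty_of_forall_notMem (by
      intro e
      induction e using Sym2.ind with
      | _ x y => rcases x with x | x <;> exact fun _ => x.elim0)
    rw [hempty, Set.ncard_empty] at hE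
    have hch : (0 : ℕ).choose 2 = 0 := rfl
    omega
  set k := 2 * m - 1 with hk
  have hk1 : 1 ≤ k := by omega
  have hfin : G.edgeSet.Finite := Set.toFinite _
  set Ged : Finset (Sym2 (Fin m ⊕ Fin m)) := hfin.toFinset with hGed
  have hmemGed : ∀ e, e ∈ Ged ↔ e ∈ G.edgeSet := fun e => hfin.mem_toFinset
  set C : Fin k → Finset (Sym2 (Fin m ⊕ Fin m)) :=
    fun i => Ged.filter (fun e => col e = g ((i : ℕ) + 1)) with hC
  have hiIcc : ∀ i : Fin k, (i : ℕ) + 1 ∈ Set.Icc 1 (2 * m - 1) := by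
    intro i
    have := i.isLt
    rw [Set.mem_Icc]
    omega
  have hCcard : ∀ i : Fin k, (C i).card = max (((i : ℕ) + 1) / 2) 1 := by
    intro i
    have hs : ({e ∈ G.edgeSet | col e = g ((i : ℕ) + 1)} : Set _) = ↑(C i) := by
      ext e
      simp only [hC, Finset.coe_filter, Set.mem_setOf_eq, hmemGed e]
    have hc := hcute ((i : ℕ) + 1) (hiIcc i)
    rw [hs, Set.ncard_coe_finset] at hc
    exact hc
  have hCsubG : ∀ i : Fin k, ∀ e ∈ C i, e ∈ G.edgeSet := by
    intro i e he
    exact (hmemGed e).1 (Finset.mem_filter.1 he).1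
  have hCcol : ∀ i : Fin k, ∀ e ∈ C i, col e = g ((i : ℕ) + 1) :=
    fun i e he => (Finset.mem_filter.1 he).2
  have hgInj : ∀ i j : Fin k, g ((i : ℕ) + 1) = g ((j : ℕ) + 1) → i = j := by
    intro i j h
    have := hg.injOn (hiIcc i) (hiIcc j) h
    exact Fin.ext (by omega)
  have hdisj : ∀ i j : Fin k, i ≠ j → Disjoint (C i) (C j) := by
    intro i j hij
    rw [Finset.disjoint_left]
    intro e hei hej
    exact hij (hgInj i j ((hCcol i e hei).symm.trans (hCcol j e hej)))
  have hbipG : ∀ e ∈ G.edgeSet, ∃ u v : Fin m, e = s(Sum.inl u, Sum.inr v) := by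
    intro e he
    have heK := SimpleGraph.edgeSet_mono hG he
    revert heK
    induction e using Sym2.ind with
    | _ x y =>
      intro heK
      rw [SimpleGraph.mem_edgeSet] at heK
      rcases x with u | u <;> rcases y with v | v
      · simp at heK
      · exact ⟨u, v, rfl⟩
      · exact ⟨v, u, Sym2.eq_swap⟩
      · simp at heK
  have hcond : ∀ S : Finset (Fin k), S.card ≤ st17_rank (S.biUnion C) := by
    intro S
    rcases Finset.eq_empty_or_nonempty S with rfl | hSne
    · simp
    · have hcardU : (S.biUnion C).card = ∑ i ∈ S, (C i).card :=
        Finset.card_biUnion (fun i _ j _ hij => hdisj i j hij)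
      set S' : Finset ℕ := S.image (fun i : Fin k => (i : ℕ) + 1) with hS'
      have hS'card : S'.card = S.card :=
        Finset.card_image_of_injOn (fun i _ j _ h => Fin.ext (by omega))
      have hsum' : ∑ j ∈ S', max (j / 2) 1 = ∑ i ∈ S, (C i).card := by
        rw [hS', Finset.sum_image (fun x _ y _ h => Fin.ext (by omega : (x : ℕ) = y))]
        exact Finset.sum_congr rfl (fun i _ => (hCcard i).symm)
      have hpos' : ∀ x ∈ S', 1 ≤ x := by
        intro x hx
        obtain ⟨i, _, rfl⟩ := Finset.mem_image.1 hx
        omega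
      have hmin := st17_sum_min S'.card S' rfl hpos' _ st17_max_mono
      have hS'pos : 1 ≤ S'.card := by
        rw [hS'card]
        exact Finset.card_pos.2 hSne
      rw [st17_sum_sizes S'.card hS'pos] at hmin
      apply st17_rank_of_card
      · intro e he
        obtain ⟨i, _, hei⟩ := Finset.mem_biUnion.1 he
        exact hbipG e (hCsubG i e hei)
      · rw [hcardU, ← hsum']
        rw [hS'card] at hmin
        exact hmin
  obtain ⟨f, hfmem, hfrank⟩ := st17_abstract_rado k st17_rank st17_rank_empty
    (fun X Y h => st17_rank_mono h) st17_rank_step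
    (fun X Y e h1 h2 => st17_rank_dim X Y e h1 h2) C hcond
  set F : Finset (Sym2 (Fin m ⊕ Fin m)) := Finset.image f Finset.univ with hF
  have hFsubG : ∀ e ∈ F, e ∈ G.edgeSet := by
    intro e he
    obtain ⟨i, _, rfl⟩ := Finset.mem_image.1 he
    exact hCsubG i _ (hfmem i)
  have hFcard_le : F.card ≤ k := by
    calc F.card ≤ (Finset.univ : Finset (Fin k)).card := Finset.card_image_le
    _ = k := by simp
  have hrank_le : st17_rank F ≤ F.card :=
    st17_rank_le_card st17_rank st17_rank_empty st17_rank_step F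
  have hFcard : F.card = k := le_antisymm hFcard_le (le_trans hfrank hrank_le)
  have hrankF : st17_rank F = k := le_antisymm (hrank_le.trans (le_of_eq hFcard)) hfrank
  have hcV : Fintype.card (Fin m ⊕ Fin m) = 2 * m := by
    rw [Fintype.card_sum, Fintype.card_fin]
    omega
  have hcomps1 : st17_comps F = 1 := by
    have h1 := st17_comps_le F
    have hpos : 1 ≤ st17_comps F := by
      rw [st17_comps]
      have : Nonempty (SimpleGraph.fromEdgeSet (↑F : Set (Sym2 (Fin m ⊕ Fin m)))).ConnectedComponent :=
        ⟨(SimpleGraph.fromEdgeSet (↑F : Set (Sym2 (Fin m ⊕ Fin m)))).connectedComponentMk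
          (Sum.inl ⟨0, hm⟩)⟩
      exact Nat.card_pos
    rw [st17_rank] at hrankF
    rw [hcV] at hrankF h1
    omega
  set T := SimpleGraph.fromEdgeSet (↑F : Set (Sym2 (Fin m ⊕ Fin m))) with hT
  have hTedge : T.edgeSet = ↑F := by
    rw [hT, SimpleGraph.edgeSet_fromEdgeSet]
    ext e
    simp only [Set.mem_diff, Set.mem_setOf_eq, Finset.mem_coe]
    constructor
    · exact fun h => h.1
    · intro he
      exact ⟨he, SimpleGraph.not_isDiag_of_mem_edgeSet G (hFsubG e he)⟩
  have hTleG : T ≤ G := by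
    have h := SimpleGraph.fromEdgeSet_mono
      (show (↑F : Set (Sym2 (Fin m ⊕ Fin m))) ⊆ G.edgeSet from fun e he => hFsubG e he)
    rwa [SimpleGraph.fromEdgeSet_edgeSet] at h
  haveI : Nonempty (Fin m ⊕ Fin m) := ⟨Sum.inl ⟨0, hm⟩⟩
  have hTconn : T.Connected := st17_connected_of_comps_eq_one hcomps1
  have hTacyclic : T.IsAcyclic := by
    rw [SimpleGraph.isAcyclic_iff_forall_adj_isBridge]
    intro v w hvw
    rw [SimpleGraph.isBridge_iff]
    show ¬ (T \ SimpleGraph.fromEdgeSet {s(v, w)}).Reachable v w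
    intro hreach
    have hvne : v ≠ w := hvw.ne
    have hmemF : s(v, w) ∈ F := by
      have hmem : s(v, w) ∈ T.edgeSet := (SimpleGraph.mem_edgeSet T).2 hvw
      rwa [hTedge] at hmem
    have hgraph : T \ SimpleGraph.fromEdgeSet {s(v, w)}
        = SimpleGraph.fromEdgeSet (↑(F.erase s(v, w)) : Set (Sym2 (Fin m ⊕ Fin m))) := by
      ext x y
      rw [SimpleGraph.sdiff_adj, hT, SimpleGraph.fromEdgeSet_adj, SimpleGraph.fromEdgeSet_adj,
        SimpleGraph.fromEdgeSet_adj]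
      simp only [Finset.coe_erase, Set.mem_diff, Set.mem_singleton_iff, Finset.mem_coe]
      constructor
      · rintro ⟨⟨hmem, hne⟩, hnot⟩
        exact ⟨⟨hmem, fun heq => hnot ⟨heq, hne⟩⟩, hne⟩
      · rintro ⟨⟨hmem, hneq⟩, hne⟩
        exact ⟨⟨hmem, hne⟩, fun h => hneq h.1⟩
    rw [hgraph] at hreach
    have heq := st17_comps_insert_reach (E := F.erase s(v, w)) hreach
    rw [Finset.insert_erase hmemF] at heq
    have hle : st17_rank (F.erase s(v, w)) ≤ (F.erase s(v, w)).card :=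
      st17_rank_le_card st17_rank st17_rank_empty st17_rank_step _
    have herasecard : (F.erase s(v, w)).card = k - 1 := by
      rw [Finset.card_erase_of_mem hmemF, hFcard]
    have hrankerase : st17_rank (F.erase s(v, w)) = st17_rank F := by
      rw [st17_rank, st17_rank, heq]
    omega
  refine ⟨T, hTleG, ⟨hTconn, hTacyclic⟩, ?_⟩
  rw [hTedge]
  intro e1 he1 e2 he2 hcol12
  obtain ⟨i, _, rfl⟩ := Finset.mem_image.1 (Finset.mem_coe.1 he1)
  obtain ⟨j, _, rfl⟩ := Finset.mem_image.1 (Finset.mem_coe.1 he2)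
  have h1 := hCcol i (f i) (hfmem i)
  have h2 := hCcol j (f j) (hfmem j)
  have hij : i = j := hgInj i j (by rw [← h1, ← h2]; exact hcol12)
  rw [hij]
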